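/- If the involution τ: α → α is fixed-point-free, then every symmetric nanophrase over α is even, i.e., each of its constituent words has even length. -/

import Mathlib

/-! Nanowords over an alphabet `α` with involution `τ`, following Turaev.
A letter is a pair (id, α-value); a nanoword is a word in which every letter id
occurs exactly twice, with a well-defined α-value. -/

/-- A letter of an `α`-alphabet: an identifier together with its projection to `α`. -/
abbrev Letter (α : Type) := ℕ × α

/-- `w` is a nanoword: each occurring letter id occurs exactly twice and determines
its `α`-value. -/
def IsNanoword {α : Type} (w : List (Letter α)) : Prop :=
  (∀ p ∈ w, (w.filter fun q => q.1 == p.1).length = 2) ∧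
  ∀ p ∈ w, ∀ q ∈ w, p.1 = q.1 → p.2 = q.2

/-- The set of letter ids occurring in a word. -/
def lettersOf {α : Type} (w : List (Letter α)) : Set ℕ := {n | ∃ a, (n, a) ∈ w}

/-- `splice [x₁,…,x_{k+1}] [v₁,…,v_k] = x₁ v₁ x₂ v₂ ⋯ x_k v_k x_{k+1}`:
the nanoword with a factor `(v₁|⋯|v_k)`. -/
def splice {α : Type} : List (List (Letter α)) → List (List (Letter α)) → List (Letter α)
  | [], _ => []
  | x :: xs, [] => x ++ splice xs []
  | x :: xs, v :: vs => x ++ v ++ splice xs vs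

/-- The nanophrase `vs = (v₁|⋯|v_k)` is symmetric: there is `ι` with `ι ∘ vᵣ = vᵣ⁻`
for all `r`, and `|ι B| = τ^{ε B} |B|` where `ε B = 0` iff both occurrences of `B`
lie in the same word of `vs`. -/
def IsSymPhrase {α : Type} (τ : α → α) (vs : List (List (Letter α))) : Prop :=
  ∃ ι : Letter α → Letter α,
    (∀ v ∈ vs, v.map ι = v.reverse) ∧
    ∀ B ∈ vs.flatten,
      ((∃ v ∈ vs, (v.filter fun q => q.1 == B.1).length = 2) → (ι B).2 = B.2) ∧
      ((¬ ∃ v ∈ vs, (v.filter fun q => q.1 == B.1).length = 2) → (ι B).2 = τ B.2)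

/-- The nanophrase is even: every constituent word has even length. -/
def IsEvenPhrase {α : Type} (vs : List (List (Letter α))) : Prop :=
  ∀ v ∈ vs, Even v.length

/-- The moves (TR): isomorphisms, the three homotopy moves, and surgeries. -/
inductive NanoMove {α : Type} (τ : α → α) : List (Letter α) → List (Letter α) → Prop
  | iso (w : List (Letter α)) (f : ℕ → ℕ) (hf : Function.Injective f)
      (hw : IsNanoword w) :
      NanoMove τ w (w.map fun p => (f p.1, p.2))
  | h1 (x y : List (Letter α)) (A : Letter α)
      (hw : IsNanoword (x ++ [A, A] ++ y)) :
      NanoMove τ (x ++ [A, A] ++ y) (x ++ y)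
  | h2 (x y z : List (Letter α)) (A B : Letter α) (hAB : B.2 = τ A.2)
      (hw : IsNanoword (x ++ [A, B] ++ y ++ [B, A] ++ z)) :
      NanoMove τ (x ++ [A, B] ++ y ++ [B, A] ++ z) (x ++ y ++ z)
  | h3 (x y z t : List (Letter α)) (A B C : Letter α)
      (hAB : A.2 = B.2) (hBC : B.2 = C.2)
      (hw : IsNanoword (x ++ [A, B] ++ y ++ [A, C] ++ z ++ [B, C] ++ t)) :
      NanoMove τ (x ++ [A, B] ++ y ++ [A, C] ++ z ++ [B, C] ++ t)
                 (x ++ [B, A] ++ y ++ [C, A] ++ z ++ [C, B] ++ t)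
  | surgery (xs vs : List (List (Letter α))) (hlen : xs.length = vs.length + 1)
      (hsym : IsSymPhrase τ vs) (heven : IsEvenPhrase vs)
      (hw : IsNanoword (splice xs vs)) :
      NanoMove τ (splice xs vs) xs.flatten

/-- Cobordism: the equivalence relation generated by the moves (TR). -/
def Cobordant {α : Type} (τ : α → α) : List (Letter α) → List (Letter α) → Prop :=
  Relation.EqvGen (NanoMove τ)

open Finset in
theorem my_length_filter_eq_card {β : Type*} (l : List β) (p : β → Bool) :
    (l.filter p).length = #{i : Fin l.length | p l[i]} := by
  induction l with
  | nil => simp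
  | cons x xs ih =>
    rw [List.filter_cons]
    have := Fin.card_filter_univ_succ' (fun i : Fin (xs.length + 1) => p ((x :: xs)[i]) = true)
    simp only [List.length_cons] at *
    rw [this]
    split <;> simp_all [Fin.getElem_fin] <;> omega

/-- If the involution `τ` is fixed-point-free, then every
symmetric nanophrase over `α` is even. -/
theorem symPhrase_even_of_fixedPointFree {α : Type} (τ : α → α)
    (hτ : Function.Involutive τ) (hfree : ∀ a : α, τ a ≠ a)
    (vs : List (List (Letter α))) (hnano : IsNanoword vs.flatten)
    (hsym : IsSymPhrase τ vs) :
    ∀ v ∈ vs, Even v.length := by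
  intro v hv
  by_contra hodd
  obtain ⟨ι, hι, hval⟩ := hsym
  rw [Nat.not_even_iff_odd] at hodd
  obtain ⟨n, hn⟩ := hodd
  have hnlt : n < v.length := by omega
  -- pointwise: ι v[i] = v[L-1-i]
  have hpt : ∀ i : ℕ, (hi : i < v.length) → ι v[i] = v[v.length - 1 - i]'(by omega) := by
    intro i hi
    have := hι v hv
    have h2 : (v.map ι)[i]'(by simpa using hi) = v.reverse[i]'(by simpa using hi) := by
      simp_rw [this]
    simpa using h2
  set B := v[n] with hB
  have hfix : ι B = B := by
    have := hpt n hnlt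
    have he : v.length - 1 - n = n := by omega
    simp_rw [he] at this
    exact this
  have hBv : B ∈ v := List.getElem_mem hnlt
  have hBfl : B ∈ vs.flatten := List.mem_flatten.2 ⟨v, hv, hBv⟩
  obtain ⟨h0, h1⟩ := hval B hBfl
  by_cases hex : ∃ v' ∈ vs, (v'.filter fun q => q.1 == B.1).length = 2
  · -- ε = 0 case: derive count ≥ 3 contradiction
    obtain ⟨v', hv', hfilt⟩ := hex
    -- counts
    have hflcount : ((vs.flatten.filter fun q => q.1 == B.1).length) = 2 := hnano.1 B hBfl
    have hsum : ((vs.map fun w => (w.filter fun q => q.1 == B.1).length).sum) = 2 := by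
      rw [← hflcount, List.filter_flatten, List.length_flatten, List.map_map]
      rfl
    -- v = v' as occurrence; show v's own filter length is 2
    have hcv : ((v.filter fun q => q.1 == B.1).length) = 2 := by
      by_contra hne
      -- v ≠ v' then: split vs at v'
      obtain ⟨l1, l2, rfl⟩ := List.append_of_mem hv'
      have hvmem : v ∈ l1 ∨ v ∈ l2 := by
        rcases List.mem_append.1 hv with h | h
        · exact Or.inl h
        · rcases List.mem_cons.1 h with h | h
          · exact absurd (h ▸ hfilt) hne
          · exact Or.inr h
      have hpos : 1 ≤ (v.filter fun q => q.1 == B.1).length := by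
        have : B ∈ v.filter fun q => q.1 == B.1 :=
          List.mem_filter.2 ⟨hBv, by simp⟩
        exact List.length_pos_of_mem this
      rw [List.map_append, List.map_cons, List.sum_append, List.sum_cons, hfilt] at hsum
      rcases hvmem with h | h
      · have : (v.filter fun q => q.1 == B.1).length ≤
            (l1.map fun w => (w.filter fun q => q.1 == B.1).length).sum :=
          List.single_le_sum (by simp) _ (List.mem_map_of_mem h)
        omega
      · have : (v.filter fun q => q.1 == B.1).length ≤
            (l2.map fun w => (w.filter fun q => q.1 == B.1).length).sum :=
          List.single_le_sum (by simp) _ (List.mem_map_of_mem h)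
        omega
    -- now card of index set = 2
    have hcard : (Finset.univ.filter fun i : Fin v.length => (v[i].1 == B.1) = true).card = 2 := by
      exact (my_length_filter_eq_card v (fun q => q.1 == B.1)).symm.trans hcv
    -- obtain second index m ≠ n
    have hnmem : (⟨n, hnlt⟩ : Fin v.length) ∈
        Finset.univ.filter fun i : Fin v.length => (v[i].1 == B.1) = true := by
      simp [hB]
    obtain ⟨m, hmmem, hmn⟩ : ∃ m ∈ Finset.univ.filter
        (fun i : Fin v.length => (v[i].1 == B.1) = true), m ≠ ⟨n, hnlt⟩ := by
      by_contra hc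
      push_neg at hc
      have : (Finset.univ.filter fun i : Fin v.length => (v[i].1 == B.1) = true) = {⟨n, hnlt⟩} := by
        apply Finset.eq_singleton_iff_unique_mem.2 ⟨hnmem, hc⟩
      rw [this] at hcard; simp at hcard
    have hmid : v[m.1].1 = B.1 := by
      have := (Finset.mem_filter.1 hmmem).2
      simpa using this
    have hmval : v[m.1] = B := by
      have h2 := hnano.2 v[m.1] (List.mem_flatten.2 ⟨v, hv, List.getElem_mem m.2⟩)
        B hBfl hmid
      exact Prod.ext hmid h2
    -- third index
    have hpm := hpt m.1 m.2
    rw [hmval, hfix] at hpm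
    have hm3 : v.length - 1 - m.1 < v.length := by omega
    have hthird : (⟨v.length - 1 - m.1, hm3⟩ : Fin v.length) ∈
        Finset.univ.filter fun i : Fin v.length => (v[i].1 == B.1) = true := by
      simp only [Finset.mem_filter, Finset.mem_univ, true_and, Fin.getElem_fin]
      rw [← hpm]
      simp
    have hmmem' := hmmem
    have hne1 : (⟨v.length - 1 - m.1, hm3⟩ : Fin v.length) ≠ m := by
      intro h
      have hmn' : m.1 ≠ n := fun h' => hmn (Fin.ext h')
      have h2 : v.length - 1 - m.1 = m.1 := by
        simpa using congrArg Fin.val h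
      omega
    have hne2 : (⟨v.length - 1 - m.1, hm3⟩ : Fin v.length) ≠ ⟨n, hnlt⟩ := by
      intro h
      have : v.length - 1 - m.1 = n := by simpa using congrArg Fin.val h
      have hmn' : m.1 ≠ n := fun h' => hmn (Fin.ext h')
      omega
    have : ({⟨v.length - 1 - m.1, hm3⟩, m, ⟨n, hnlt⟩} : Finset (Fin v.length)) ⊆
        Finset.univ.filter fun i : Fin v.length => (v[i].1 == B.1) = true := by
      intro x hx
      simp only [Finset.mem_insert, Finset.mem_singleton] at hx
      rcases hx with rfl | rfl | rfl
      · exact hthird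
      · exact hmmem
      · exact hnmem
    have hc3 : 3 ≤ (Finset.univ.filter fun i : Fin v.length => (v[i].1 == B.1) = true).card := by
      calc 3 = ({⟨v.length - 1 - m.1, hm3⟩, m, ⟨n, hnlt⟩} : Finset (Fin v.length)).card := by
                rw [Finset.card_insert_of_notMem (by simp [hne1, hne2]),
                  Finset.card_insert_of_notMem (by simpa using hmn), Finset.card_singleton]
           _ ≤ _ := Finset.card_le_card this
    omega
  · have := h1 hex
    rw [hfix] at this
    exact hfree B.2 this.symm
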